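/- For all integers k ≥ 1, r ≥ 1 and j ≥ 0, the simple k-Narayana number, defined as the k×k determinant det((C(r-1, j+l-i))_{1≤i,l≤k}), equals the product ∏_{i=0}^{k-1} C(r-1+i, j) / C(j+i, j) of rational numbers. -/

import Mathlib

/-- Binomial coefficient `C(a,b)` for integers, with the convention that it is `0`
whenever `b < 0` or `b > a`. -/
def icb (a b : ℤ) : ℤ := if 0 ≤ b ∧ b ≤ a then (a.toNat.choose b.toNat : ℤ) else 0

open Finset Matrix Polynomial

private lemma icb_natCast (a b : ℕ) : icb (a : ℤ) (b : ℤ) = (a.choose b : ℤ) := by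
  unfold icb
  rcases le_or_gt b a with h | h
  · rw [if_pos ⟨Int.natCast_nonneg b, by exact_mod_cast h⟩]
    simp
  · rw [if_neg (by push_cast; omega), Nat.choose_eq_zero_of_lt h]
    simp

private lemma icb_eq (a m t : ℕ) :
    icb (a : ℤ) ((m : ℤ) - t) = if t ≤ m then (a.choose (m - t) : ℤ) else 0 := by
  by_cases h : t ≤ m
  · rw [if_pos h, show (m : ℤ) - t = ((m - t : ℕ) : ℤ) by push_cast [h]; ring, icb_natCast]
  · rw [if_neg h]
    unfold icb
    rw [if_neg (by push_cast; omega)]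

private lemma choose_step (n c : ℕ) :
    (n.choose (c + 1) : ℤ) * ((c : ℤ) + 1) = (n.choose c : ℤ) * ((n : ℤ) - c) := by
  rcases le_or_gt c n with h | h
  · have := Nat.choose_succ_right_eq n c
    zify [h] at this
    exact_mod_cast this
  · rw [Nat.choose_eq_zero_of_lt h, Nat.choose_eq_zero_of_lt (by omega)]
    simp

private lemma key (n b : ℕ) : ∀ l : ℕ,
    (((b + l).factorial : ℤ)) * (n.choose (b + l) : ℤ) =
      (b.factorial : ℤ) * (n.choose b : ℤ) * ∏ t ∈ range l, ((n : ℤ) - b - t)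
  | 0 => by simp
  | l + 1 => by
    have ih := key n b l
    have h := choose_step n (b + l)
    rw [show b + (l + 1) = (b + l) + 1 by ring, prod_range_succ, Nat.factorial_succ]
    push_cast at h ih ⊢
    linear_combination ((b + l).factorial : ℤ) * h + ((n : ℤ) - b - l) * ih

private lemma entry (n b l : ℕ) :
    (n.choose (b + l) : ℚ) =
      (n.choose b : ℚ) * (∏ t ∈ range l, ((n : ℚ) - b - t)) *
        ((b.factorial : ℚ) / ((b + l).factorial : ℚ)) := by
  have h := key n b l
  have h2 : (((b + l).factorial : ℚ)) * (n.choose (b + l) : ℚ) =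
      (b.factorial : ℚ) * (n.choose b : ℚ) * ∏ t ∈ range l, ((n : ℚ) - b - t) := by
    exact_mod_cast congrArg (fun z : ℤ => (z : ℚ)) h
  have hf : ((b + l).factorial : ℚ) ≠ 0 := by exact_mod_cast (Nat.factorial_pos _).ne'
  field_simp
  linear_combination h2

private lemma nsum (i m k a : ℕ) (hik : i < k) :
    ∑ t ∈ range k, (if t ≤ m then i.choose t * a.choose (m - t) else 0) =
      (a + i).choose m := by
  set g : ℕ → ℕ := fun t => if t ≤ m then i.choose t * a.choose (m - t) else 0 with hg
  set K := max k (m + 1) with hK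
  have h1 : ∑ t ∈ range k, g t = ∑ t ∈ range K, g t := by
    apply Finset.sum_subset (Finset.range_subset_range.2 (le_max_left _ _))
    intro t _ ht
    have : i < t := lt_of_lt_of_le hik (by simpa using ht)
    simp [hg, Nat.choose_eq_zero_of_lt this]
  have h2 : (a + i).choose m = ∑ t ∈ range (m + 1), i.choose t * a.choose (m - t) := by
    rw [show a + i = i + a by ring, Nat.add_choose_eq,
      Finset.Nat.sum_antidiagonal_eq_sum_range_succ_mk]
  have h3 : ∑ t ∈ range (m + 1), i.choose t * a.choose (m - t) = ∑ t ∈ range K, g t := by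
    rw [show ∑ t ∈ range (m + 1), i.choose t * a.choose (m - t) = ∑ t ∈ range (m + 1), g t from
      Finset.sum_congr rfl fun t ht => by
        simp [hg, if_pos (Nat.lt_succ_iff.mp (Finset.mem_range.mp ht))]]
    apply Finset.sum_subset (Finset.range_subset_range.2 (le_max_right _ _))
    intro t _ ht
    simp only [Finset.mem_range, not_lt] at ht
    simp only [hg]
    rw [if_neg (by omega : ¬ t ≤ m)]
  rw [h1, h2, h3]

private lemma qsum (i m k a : ℕ) (hik : i < k) :
    ∑ t ∈ range k, (i.choose t : ℚ) * (if t ≤ m then (a.choose (m - t) : ℚ) else 0) =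
      ((a + i).choose m : ℚ) := by
  rw [← nsum i m k a hik, Nat.cast_sum]
  refine Finset.sum_congr rfl fun t _ => ?_
  split <;> simp

/-- The simple `k`-Narayana number `𝒩_k(r,j) = det((C(r-1, j+l-i))_{1≤i,l≤k})`
equals `∏_{i=0}^{k-1} C(r-1+i, j) / C(j+i, j)` in `ℚ`.
Below `i, l : Fin k` are `0`-based. -/
theorem stmt3 (k : ℕ) (hk : 1 ≤ k) (r j : ℕ) (hr : 1 ≤ r) :
    ((Matrix.det (Matrix.of fun i l : Fin k =>
        icb ((r : ℤ) - 1) ((j : ℤ) + ((l : ℕ) : ℤ) - ((i : ℕ) : ℤ))) : ℤ) : ℚ) =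
      ∏ i ∈ Finset.range k,
        ((r - 1 + i).choose j : ℚ) / ((j + i).choose j : ℚ) := by
  obtain ⟨a, rfl⟩ : ∃ a, r = a + 1 := ⟨r - 1, by omega⟩
  obtain ⟨n, rfl⟩ : ∃ n, k = n + 1 := ⟨k - 1, by omega⟩
  set k := n + 1 with hk'
  -- the matrices
  set Mq : Matrix (Fin k) (Fin k) ℚ :=
    Matrix.of (fun i l : Fin k => ((icb (a : ℤ) ((j : ℤ) + (l : ℕ) - (i : ℕ)) : ℤ) : ℚ)) with hMq
  set L : Matrix (Fin k) (Fin k) ℚ :=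
    Matrix.of (fun i t : Fin k => (((i : ℕ).choose (t : ℕ) : ℕ) : ℚ)) with hL
  set N : Matrix (Fin k) (Fin k) ℚ :=
    Matrix.of (fun i l : Fin k => (((a + (i : ℕ)).choose (j + (l : ℕ)) : ℕ) : ℚ)) with hN
  set c : Fin k → ℚ := fun i => (((a + (i : ℕ)).choose j : ℕ) : ℚ) with hc
  set d : Fin k → ℚ := fun l => ((j.factorial : ℚ) / ((j + (l : ℕ)).factorial : ℚ)) with hd
  set x : Fin k → ℚ := fun i => ((i : ℕ) : ℚ) + ((a : ℚ) - (j : ℚ)) with hx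
  set p : Fin k → ℚ[X] := fun l => ∏ t ∈ range (l : ℕ), (X - Polynomial.C (t : ℚ)) with hp
  set W : Matrix (Fin k) (Fin k) ℚ :=
    Matrix.of (fun i l : Fin k => (p l).eval (x i)) with hW
  -- cast of the determinant
  have hcast : ((Matrix.det (Matrix.of fun i l : Fin k =>
      icb (((a + 1 : ℕ) : ℤ) - 1) ((j : ℤ) + ((l : ℕ) : ℤ) - ((i : ℕ) : ℤ))) : ℤ) : ℚ)
      = Mq.det := by
    rw [show ((Matrix.det _ : ℤ) : ℚ) = (Int.castRingHom ℚ) (Matrix.det _) from rfl,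
      RingHom.map_det]
    congr 1
    ext i l
    simp only [Matrix.map_apply, Matrix.of_apply, hMq, eq_intCast]
    norm_num
  rw [hcast]
  -- L * Mq = N
  have hLM : L * Mq = N := by
    ext i l
    rw [Matrix.mul_apply]
    simp only [hL, hN, hMq, Matrix.of_apply]
    have : ∀ t : Fin k, (((i : ℕ).choose (t : ℕ) : ℚ)) *
        ((icb (a : ℤ) ((j : ℤ) + (l : ℕ) - (t : ℕ)) : ℤ) : ℚ)
        = ((i : ℕ).choose (t : ℕ) : ℚ) *
          (if (t : ℕ) ≤ j + (l : ℕ) then ((a.choose (j + (l : ℕ) - (t : ℕ)) : ℕ) : ℚ) else 0) := by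
      intro t
      rw [show (j : ℤ) + (l : ℕ) - (t : ℕ) = ((j + (l : ℕ) : ℕ) : ℤ) - ((t : ℕ) : ℤ) by push_cast; ring,
        icb_eq]
      split <;> simp
    rw [Finset.sum_congr rfl (fun t _ => this t)]
    rw [Fin.sum_univ_eq_sum_range
      (fun t => ((i : ℕ).choose t : ℚ) * (if t ≤ j + (l : ℕ) then ((a.choose (j + (l : ℕ) - t) : ℕ) : ℚ) else 0))]
    exact qsum (i : ℕ) (j + (l : ℕ)) k a i.isLt
  -- N factorization
  have hNf : N = Matrix.diagonal c * W * Matrix.diagonal d := by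
    ext i l
    rw [Matrix.mul_diagonal, Matrix.diagonal_mul]
    simp only [hN, hW, hp, hc, hd, Matrix.of_apply, Polynomial.eval_prod, Polynomial.eval_sub,
      Polynomial.eval_X, Polynomial.eval_C]
    rw [entry (a + (i : ℕ)) j (l : ℕ)]
    congr 2
    refine Finset.prod_congr rfl fun t _ => ?_
    rw [hx]
    push_cast
    ring
  -- determinants
  have hdetL : L.det = 1 := by
    rw [Matrix.det_of_lowerTriangular L (fun i t h => by
      simp only [hL, Matrix.of_apply]
      rw [Nat.choose_eq_zero_of_lt (by exact_mod_cast h)]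
      simp)]
    simp [hL]
  have hdeg : ∀ l : Fin k, (p l).natDegree = (l : ℕ) := by
    intro l
    rw [hp]
    rw [Polynomial.natDegree_prod _ _ (fun t _ => Polynomial.X_sub_C_ne_zero _)]
    simp only [Polynomial.natDegree_X_sub_C, Finset.sum_const, Finset.card_range, smul_eq_mul,
      mul_one]
  have hmonic : ∀ l : Fin k, (p l).Monic := fun l =>
    monic_prod_of_monic _ _ fun t _ => Polynomial.monic_X_sub_C _
  have hdetW : W.det = ((Nat.superFactorial n : ℕ) : ℚ) := by
    rw [hW, ← Matrix.det_eval_matrixOfPolynomials_eq_det_vandermonde x p hdeg hmonic]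
    rw [hx]
    rw [Matrix.det_vandermonde_add (fun i : Fin k => ((i : ℕ) : ℚ)) ((a : ℚ) - (j : ℚ))]
    exact Matrix.det_vandermonde_id_eq_superFactorial n
  -- combine
  have hdetM : Mq.det = N.det := by
    have := congrArg Matrix.det hLM
    rwa [Matrix.det_mul, hdetL, one_mul] at this
  rw [hdetM, hNf, Matrix.det_mul, Matrix.det_mul, Matrix.det_diagonal, Matrix.det_diagonal,
    hdetW]
  have hsf : ((Nat.superFactorial n : ℕ) : ℚ) = ∏ i : Fin k, (((i : ℕ).factorial : ℕ) : ℚ) := by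
    rw [Fin.prod_univ_eq_prod_range (fun m => ((m.factorial : ℕ) : ℚ)) k, ← Nat.cast_prod,
      Nat.prod_range_succ_factorial]
  rw [hsf, ← Finset.prod_mul_distrib, ← Finset.prod_mul_distrib,
    ← Fin.prod_univ_eq_prod_range
      (fun m => (((a + 1 - 1 + m).choose j : ℕ) : ℚ) / (((j + m).choose j : ℕ) : ℚ)) k]
  refine Finset.prod_congr rfl fun i _ => ?_
  simp only [hc, hd, Nat.add_sub_cancel]
  have hfac : ((((j + (i : ℕ)).choose j : ℕ) : ℚ)) * (j.factorial : ℚ) * ((i : ℕ).factorial : ℚ)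
      = (((j + (i : ℕ)).factorial : ℕ) : ℚ) := by
    have := Nat.choose_mul_factorial_mul_factorial (Nat.le_add_right j (i : ℕ))
    rw [show j + (i : ℕ) - j = (i : ℕ) by omega] at this
    exact_mod_cast this
  have h0 : (((j + (i : ℕ)).choose j : ℕ) : ℚ) ≠ 0 :=
    Nat.cast_ne_zero.2 (Nat.choose_pos (Nat.le_add_right j (i : ℕ))).ne'
  have h1 : (((j + (i : ℕ)).factorial : ℕ) : ℚ) ≠ 0 :=
    Nat.cast_ne_zero.2 (Nat.factorial_pos _).ne'
  have h2 : ((j.factorial : ℕ) : ℚ) ≠ 0 := Nat.cast_ne_zero.2 (Nat.factorial_pos _).ne'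
  field_simp
  linear_combination (((a + (i : ℕ)).choose j : ℕ) : ℚ) * hfac
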